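/- For every integer n ≥ 4 and all real parameters γ, β, the level-1 QAOA approximation ratio on K_{2n} is bounded as ((2n−1)/n)·(1/2 + f_n(γ,β)) < 1 − 1/(2n(4n−1)) < 1 − 1/(8n²). In particular, the approximation ratio of level-1 QAOA for MAX-CUT on K_{2n} is strictly less than 1 − 1/(8n²). -/

import Mathlib

open Real

lemma qaoa_sum_ge_aux (m : ℕ) (x : ℝ) (hx0 : 0 ≤ x) (hx1 : x ≤ 1) :
    2 * (m:ℝ) * x ^ m ≤ ∑ i ∈ Finset.range (2*m), x ^ i := by
  induction m with
  | zero => simp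
  | succ m ih =>
    have h1 : (2*(m+1)) = (2*m+1) + 1 := by ring
    rw [h1, Finset.sum_range_succ, geom_sum_succ]
    have h2 : x * (2 * (m:ℝ) * x ^ m) ≤ x * ∑ i ∈ Finset.range (2*m), x ^ i :=
      mul_le_mul_of_nonneg_left ih hx0
    have h3 : x ^ (2*m+2) ≤ x ^ (2*m+1) :=
      pow_le_pow_of_le_one hx0 hx1 (by omega)
    have e1 : x ^ (2*m+2) = (x ^ (m+1))^2 := by
      rw [← pow_mul]; ring_nf
    have h4 : 0 ≤ (1 - x^(m+1))^2 := sq_nonneg _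
    have e2 : x ^ (m+1) = x * x ^ m := by rw [pow_succ]; ring
    push_cast
    nlinarith [h2, h3, h4, e1, e2]

lemma qaoa_claimA (m : ℕ) (x : ℝ) (hx0 : 0 ≤ x) (hx1 : x ≤ 1) :
    2 * (m:ℝ) * (1 - x) * x ^ m ≤ 1 - x ^ (2*m) := by
  have hs := qaoa_sum_ge_aux m x hx0 hx1
  have hg : (1 - x) * ∑ i ∈ Finset.range (2*m), x ^ i = 1 - x ^ (2*m) := by
    linear_combination (-1 : ℝ) * geom_sum_mul x (2*m)
  calc 2 * (m:ℝ) * (1 - x) * x ^ m = (1-x) * (2*(m:ℝ)*x^m) := by ring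
    _ ≤ (1-x) * ∑ i ∈ Finset.range (2*m), x ^ i :=
        mul_le_mul_of_nonneg_left hs (by linarith)
    _ = 1 - x ^ (2*m) := hg

lemma qaoa_pow2_gt (m : ℕ) (hm : 6 ≤ m) : (2*m+3)^2 < 2^(m+2) := by
  induction m with
  | zero => omega
  | succ m ih =>
    rcases Nat.lt_or_ge m 6 with h | h
    · interval_cases m <;> omega
    · have := ih h
      have h2 : (2*(m+1)+3)^2 < 2 * (2*m+3)^2 := by nlinarith
      calc (2*(m+1)+3)^2 < 2*(2*m+3)^2 := h2
        _ < 2 * 2^(m+2) := by omega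
        _ = 2^(m+1+2) := by ring

lemma qaoa_main_ineq (m : ℕ) (hm : 6 ≤ m) (x : ℝ) (hx0 : 0 ≤ x) (hx1 : x ≤ 1) :
    (2*(m:ℝ)+3)^2 * ((1-x) * x^m) < 4 + (2*(m:ℝ)+3) * (1 - (2*x-1)^m) := by
  have hmR : (6:ℝ) ≤ (m:ℝ) := by exact_mod_cast hm
  have habs : |2*x-1| ≤ 1 := by rw [abs_le]; constructor <;> linarith
  have hcm1 : (2*x-1)^m ≤ 1 := by
    calc (2*x-1)^m ≤ |(2*x-1)^m| := le_abs_self _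
      _ = |2*x-1|^m := abs_pow _ _
      _ ≤ 1 := pow_le_one₀ (abs_nonneg _) habs
  rcases le_or_gt x (1/2) with h | h
  · have hxm : x^m ≤ (1/2:ℝ)^m := pow_le_pow_left₀ hx0 h m
    have hp : ((2*m+3:ℕ):ℝ)^2 < ((2:ℝ))^(m+2) := by
      exact_mod_cast qaoa_pow2_gt m hm
    have hp' : (2*(m:ℝ)+3)^2 < 4 * 2^m := by
      push_cast at hp
      calc (2*(m:ℝ)+3)^2 < 2^(m+2) := hp
        _ = 4 * 2^m := by rw [pow_add]; ring
    have h2m : (0:ℝ) < 2^m := by positivity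
    have he : (1/2:ℝ)^m = 1 / 2^m := by rw [div_pow, one_pow]
    have hb : (2*(m:ℝ)+3)^2 * ((1-x)*x^m) < 4 := by
      have hxmnn : 0 ≤ x^m := pow_nonneg hx0 m
      have h1 : (1-x)*x^m ≤ (1/2:ℝ)^m := by nlinarith
      have h2 : (2*(m:ℝ)+3)^2 * ((1-x)*x^m) ≤ (2*(m:ℝ)+3)^2 * (1/2)^m := by
        apply mul_le_mul_of_nonneg_left h1 (by positivity)
      have h3 : (2*(m:ℝ)+3)^2 * (1/2)^m < 4 := by
        rw [he, mul_one_div, div_lt_iff₀ h2m]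
        linarith
      linarith
    nlinarith [hb, hcm1, hmR]
  · have hc0 : (0:ℝ) ≤ 2*x-1 := by linarith
    have hcle : 2*x-1 ≤ x^2 := by nlinarith [sq_nonneg (x-1)]
    have hcm : (2*x-1)^m ≤ (x^2)^m := pow_le_pow_left₀ hc0 hcle m
    have he2 : (x^2)^m = x^(2*m) := by rw [← pow_mul]
    have hA := qaoa_claimA m x hx0 hx1
    have hT1 : 1 - (2*x-1)^m ≤ 1 := by
      have := pow_nonneg hc0 m; linarith
    have hT0 : 0 ≤ 1 - (2*x-1)^m := by linarith
    have hS2 : 2*(m:ℝ) * ((1-x)*x^m) ≤ 1 - (2*x-1)^m := by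
      rw [he2] at hcm; nlinarith [hA]
    have hSnn : 0 ≤ (1-x)*x^m := mul_nonneg (by linarith) (pow_nonneg hx0 m)
    nlinarith [mul_le_mul_of_nonneg_left hS2 (by nlinarith : (0:ℝ) ≤ (2*(m:ℝ)+3)^2),
      mul_le_mul_of_nonneg_left hT1 (by linarith : (0:ℝ) ≤ 3*(2*(m:ℝ)+3)), hmR, hT0, hSnn]

lemma qaoa_beta_bound (K S T p q : ℝ) (hK : 0 < K) (hT : 0 ≤ T)
    (hpq : p^2 + q^2 = 1) (hmain : K^2 * S^2 < 4 + K*T) :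
    S*(p*q) - (1/4)*p^2*T < 1/K := by
  rw [lt_div_iff₀ hK]
  by_contra hcon
  push_neg at hcon
  have hBpos : 0 < K*T + 4 - K^2*S^2 := by linarith
  have hKT4 : 0 < K*T + 4 := by nlinarith [mul_nonneg hK.le hT]
  have hL : q^2*(K*T+4-K^2*S^2) + (1/4)*(p*(K*T+4) - 2*K*S*q)^2
      = (1 - (S*(p*q) - (1/4)*p^2*T)*K) * (K*T+4) := by
    linear_combination (K*T+4) * hpq
  have hE : (1 - (S*(p*q) - (1/4)*p^2*T)*K) * (K*T+4) ≤ 0 :=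
    mul_nonpos_of_nonpos_of_nonneg (by linarith) hKT4.le
  have h1 : q^2 * (K*T+4-K^2*S^2) ≤ 0 := by
    nlinarith [sq_nonneg (p*(K*T+4) - 2*K*S*q)]
  have hq2 : q^2 = 0 := by
    rcases lt_or_eq_of_le (sq_nonneg q) with h | h
    · exact absurd (mul_pos h hBpos) (not_lt.2 h1)
    · exact h.symm
  have hq : q = 0 := by
    have := sq_eq_zero_iff.mp hq2
    exact this
  have hp2 : (p*(K*T+4))^2 ≤ 0 := by rw [hq] at hL hE; nlinarith [hL, hE]
  have hp : p*(K*T+4) = 0 := by nlinarith [sq_nonneg (p*(K*T+4))]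
  have hp0 : p = 0 := by
    rcases mul_eq_zero.mp hp with h | h
    · exact h
    · linarith
  rw [hp0, hq] at hpq
  norm_num at hpq

lemma qaoa_final_algebra (N f : ℝ) (hN : 4 ≤ N) (hf : f * (4*N-1) < 1) :
    ((2*N-1)/N)*(1/2+f) < 1 - 1/(2*N*(4*N-1)) := by
  have h2 : (0:ℝ) < N := by linarith
  have h3 : (0:ℝ) < 4*N-1 := by linarith
  have key : (1 - 1/(2*N*(4*N-1))) - ((2*N-1)/N)*(1/2+f)
      = (2*N-1)*(1 - f*(4*N-1)) / (N*(4*N-1)) := by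
    obtain ⟨M, hM⟩ : ∃ M, M = 4*N-1 := ⟨_, rfl⟩
    have hM0 : M ≠ 0 := by rw [hM]; exact h3.ne'
    rw [← hM]
    field_simp
    rw [hM]
    ring
  have hpos : 0 < (2*N-1)*(1 - f*(4*N-1)) / (N*(4*N-1)) := by
    apply div_pos
    · nlinarith
    · nlinarith
  linarith

/-- The deviation from `1/2` of the per-edge expectation value of the level-1 QAOA
for MAX-CUT on the complete graph `K_{2n}`. -/
noncomputable def qaoaF (n : ℕ) (γ β : ℝ) : ℝ :=
  (1 / 2) * sin (4 * β) * sin γ * cos γ ^ (2 * n - 2)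
    - (1 / 4) * sin (2 * β) ^ 2 * (1 - cos (2 * γ) ^ (2 * n - 2))

/-- For `n ≥ 4` and all real `γ, β`, the level-1 QAOA approximation ratio on `K_{2n}`,
namely `((2n-1)/n)·(1/2 + f_n(γ,β))`, is `< 1 - 1/(2n(4n-1)) < 1 - 1/(8n²)`. -/
theorem qaoa_ratio_lt (n : ℕ) (hn : 4 ≤ n) (γ β : ℝ) :
    ((2 * (n : ℝ) - 1) / (n : ℝ)) * (1 / 2 + qaoaF n γ β)
        < 1 - 1 / (2 * (n : ℝ) * (4 * (n : ℝ) - 1)) ∧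
      1 - 1 / (2 * (n : ℝ) * (4 * (n : ℝ) - 1)) < 1 - 1 / (8 * (n : ℝ) ^ 2) := by
  have hnR : (4:ℝ) ≤ (n:ℝ) := by exact_mod_cast hn
  set m : ℕ := 2*n - 2 with hm
  have hm6 : 6 ≤ m := by omega
  have hmR : (m:ℝ) = 2*(n:ℝ) - 2 := by
    rw [hm]; push_cast [Nat.cast_sub (by omega : 2 ≤ 2*n)]; ring
  set x : ℝ := cos γ ^ 2 with hxdef
  have hx0 : 0 ≤ x := sq_nonneg _
  have hx1 : x ≤ 1 := by
    nlinarith [sin_sq_add_cos_sq γ, sq_nonneg (sin γ)]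
  set S : ℝ := sin γ * cos γ ^ m with hSdef
  set T : ℝ := 1 - cos (2*γ) ^ m with hTdef
  set p : ℝ := sin (2*β) with hpdef
  set q : ℝ := cos (2*β) with hqdef
  have hc : cos (2*γ) = 2*x - 1 := by rw [cos_two_mul]
  have hS2 : S^2 = (1-x) * x^m := by
    have h1 : sin γ ^ 2 = 1 - x := by rw [sin_sq]
    calc S^2 = sin γ ^2 * (cos γ ^ m)^2 := by rw [hSdef]; ring
      _ = (1-x) * (cos γ ^2)^m := by rw [h1, ← pow_mul, ← pow_mul, Nat.mul_comm]
      _ = (1-x) * x^m := rfl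
  have hpq : p^2 + q^2 = 1 := sin_sq_add_cos_sq _
  have hT0 : 0 ≤ T := by
    rw [hTdef]
    have habs : |cos (2*γ)| ≤ 1 := abs_cos_le_one _
    have : cos (2*γ) ^ m ≤ 1 := by
      calc cos (2*γ)^m ≤ |cos (2*γ)^m| := le_abs_self _
        _ = |cos (2*γ)|^m := abs_pow _ _
        _ ≤ 1 := pow_le_one₀ (abs_nonneg _) habs
    linarith
  have hK0 : (0:ℝ) < 2*(m:ℝ)+3 := by
    rw [hmR]; linarith
  have hmain : (2*(m:ℝ)+3)^2 * S^2 < 4 + (2*(m:ℝ)+3)*T := by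
    rw [hS2, hTdef, hc]
    exact qaoa_main_ineq m hm6 x hx0 hx1
  have hbb := qaoa_beta_bound (2*(m:ℝ)+3) S T p q hK0 hT0 hpq hmain
  have hqf : qaoaF n γ β = S*(p*q) - (1/4)*p^2*T := by
    rw [qaoaF, hSdef, hTdef, hpdef, hqdef]
    have h4 : sin (4*β) = 2 * sin (2*β) * cos (2*β) := by
      rw [show (4:ℝ)*β = 2*(2*β) by ring, sin_two_mul]
    rw [h4]
    have : 2*n - 2 = m := by rw [hm]
    rw [this]
    ring
  have hf : qaoaF n γ β * (4*(n:ℝ)-1) < 1 := by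
    have hKeq : 2*(m:ℝ)+3 = 4*(n:ℝ)-1 := by rw [hmR]; ring
    rw [hqf, ← hKeq]
    exact (lt_div_iff₀ hK0).mp hbb
  constructor
  · exact qaoa_final_algebra (n:ℝ) (qaoaF n γ β) hnR hf
  · have h1 : (0:ℝ) < 2*(n:ℝ)*(4*(n:ℝ)-1) := by nlinarith
    have h2 : 2*(n:ℝ)*(4*(n:ℝ)-1) < 8*(n:ℝ)^2 := by nlinarith
    have := one_div_lt_one_div_of_lt h1 h2
    linarith
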